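/- Let W be a nonnegative real random variable with 0<E[W]<∞ and E[W²]<∞, let q≥3 be an integer, fix B=0, and assume there exists t_*>0 such that 𝓕_0''(t)>0 for 0<t<t_* and 𝓕_0''(t)<0 for t>t_*, where 𝓕_0(t)=E[(W/E[W])·(e^{tW}−1)/(e^{tW}+q−1)]. Define 𝒦(t) = (1/E[W])·E[log((e^{tW}+q−1)/q)] − ((q−1)/(2q))·t·𝓕_0(t) − t/q for t≥0. Then there is a unique t_c>0 such that 𝒦(t_c)=0. Moreover, setting β_c = log(1 + t_c/𝓕_0(t_c)), β'_c = e^{β_c}−1 = t_c/𝓕_0(t_c) and s_c = 𝓕_0(t_c), the pair satisfies the stationarity condition 𝓕_0(β'_c·s_c) = s_c and the criticality condition p_{β_c,0}(s_c) = p_{β_c,0}(0); that is, β_c is the critical inverse temperature of the zero-field annealed Potts model and s_c is its order parameter at criticality. -/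

import Mathlib

open MeasureTheory Filter Topology Set

/-- The function `𝓕_0(t) = E[(W/E[W])·(e^{tW}−1)/(e^{tW}+q−1)]`. -/
noncomputable def Ffun {Ω : Type*} [MeasurableSpace Ω] (μ : Measure Ω)
    (W : Ω → ℝ) (q : ℕ) (t : ℝ) : ℝ :=
  ∫ ω, (W ω / (∫ ω', W ω' ∂μ)) * (Real.exp (t * W ω) - 1) /
    (Real.exp (t * W ω) + q - 1) ∂μ

/-- The function
`𝒦(t) = (1/E[W])·E[log((e^{tW}+q−1)/q)] − ((q−1)/(2q))·t·𝓕_0(t) − t/q`. -/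
noncomputable def Kfun {Ω : Type*} [MeasurableSpace Ω] (μ : Measure Ω)
    (W : Ω → ℝ) (q : ℕ) (t : ℝ) : ℝ :=
  (1 / ∫ ω, W ω ∂μ) * (∫ ω, Real.log ((Real.exp (t * W ω) + q - 1) / q) ∂μ)
    - ((q : ℝ) - 1) / (2 * q) * (t * Ffun μ W q t) - t / q

/-- The reduced zero-field pressure functional
`p_{β,0}(s) = E[log(e^{β'Ws}+q−1)] − (β'E[W]/(2q))·[(q−1)s²+2s−1]`, `β'=e^β−1`. -/
noncomputable def pfun {Ω : Type*} [MeasurableSpace Ω] (μ : Measure Ω)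
    (W : Ω → ℝ) (q : ℕ) (β : ℝ) (s : ℝ) : ℝ :=
  (∫ ω, Real.log (Real.exp ((Real.exp β - 1) * W ω * s) + q - 1) ∂μ)
    - (Real.exp β - 1) * (∫ ω, W ω ∂μ) / (2 * q) * ((q - 1) * s ^ 2 + 2 * s - 1)

section realaux

variable {q : ℕ}

lemma qR_big (hq : 3 ≤ q) : (3:ℝ) ≤ (q:ℝ) := by exact_mod_cast hq

lemma denom_pos (hq : 3 ≤ q) (y : ℝ) : 0 < Real.exp y + (q:ℝ) - 1 := by
  have h1 := Real.exp_pos y; have h2 := qR_big hq; linarith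

lemma frac_abs_le_one (hq : 3 ≤ q) (y : ℝ) :
    |(Real.exp y - 1) / (Real.exp y + (q:ℝ) - 1)| ≤ 1 := by
  have hd := denom_pos hq y
  have hx := Real.exp_pos y
  have h2 := qR_big hq
  rw [abs_div, abs_of_pos hd, div_le_one hd, abs_le]
  constructor <;> linarith

lemma exp_div_sq_le_one (hq : 3 ≤ q) (y : ℝ) :
    Real.exp y ≤ (Real.exp y + (q:ℝ) - 1) ^ 2 := by
  have hx := Real.exp_pos y
  have h2 := qR_big hq
  nlinarith [sq_nonneg (Real.exp y + (q:ℝ) - 2)]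

lemma hasDerivAt_frac (hq : 3 ≤ q) (c w t : ℝ) :
    HasDerivAt (fun t => c * (Real.exp (t * w) - 1) / (Real.exp (t * w) + (q:ℝ) - 1))
      (c * ((q:ℝ) * w * Real.exp (t * w) / (Real.exp (t * w) + (q:ℝ) - 1) ^ 2)) t := by
  have hx : HasDerivAt (fun t : ℝ => Real.exp (t * w)) (Real.exp (t * w) * w) t :=
    (hasDerivAt_mul_const w).exp
  have hN : HasDerivAt (fun t => c * (Real.exp (t * w) - 1)) (c * (Real.exp (t * w) * w)) t :=
    (hx.sub_const 1).const_mul c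
  have hD : HasDerivAt (fun t => Real.exp (t * w) + (q:ℝ) - 1) (Real.exp (t * w) * w) t :=
    (hx.add_const _).sub_const 1
  have hd := denom_pos hq (t * w)
  have h := hN.div hD (ne_of_gt hd)
  refine h.congr_deriv ?_
  ring

lemma hasDerivAt_logfrac (hq : 3 ≤ q) (w t : ℝ) :
    HasDerivAt (fun t => Real.log ((Real.exp (t * w) + (q:ℝ) - 1) / (q:ℝ)))
      (w * Real.exp (t * w) / (Real.exp (t * w) + (q:ℝ) - 1)) t := by
  have hq' := qR_big hq
  have hx : HasDerivAt (fun t : ℝ => Real.exp (t * w)) (Real.exp (t * w) * w) t :=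
    (hasDerivAt_mul_const w).exp
  have hD : HasDerivAt (fun t => (Real.exp (t * w) + (q:ℝ) - 1) / (q:ℝ))
      (Real.exp (t * w) * w / (q:ℝ)) t := ((hx.add_const _).sub_const 1).div_const _
  have hd := denom_pos hq (t * w)
  have hne : (Real.exp (t * w) + (q:ℝ) - 1) / (q:ℝ) ≠ 0 := by positivity
  have h := hD.log hne
  convert h using 1
  field_simp

lemma log_bound (hq : 3 ≤ q) {w : ℝ} (hw : 0 ≤ w) (t : ℝ) :
    |Real.log ((Real.exp (t * w) + (q:ℝ) - 1) / (q:ℝ))| ≤ |t| * w + 1 := by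
  have hq' := qR_big hq
  have hx := Real.exp_pos (t * w)
  have hd := denom_pos hq (t * w)
  have hqpos : (0:ℝ) < (q:ℝ) := by linarith
  rcases le_or_gt 0 t with ht | ht
  · have hx1 : (1:ℝ) ≤ Real.exp (t * w) := Real.one_le_exp (by positivity)
    have h1 : (1:ℝ) ≤ (Real.exp (t * w) + (q:ℝ) - 1) / (q:ℝ) := by
      rw [le_div_iff₀ hqpos]; linarith
    have h2 : (Real.exp (t * w) + (q:ℝ) - 1) / (q:ℝ) ≤ Real.exp (t * w) := by
      rw [div_le_iff₀ hqpos]; nlinarith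
    rw [abs_of_nonneg (Real.log_nonneg h1)]
    calc Real.log ((Real.exp (t * w) + (q:ℝ) - 1) / (q:ℝ))
        ≤ Real.log (Real.exp (t * w)) := Real.log_le_log (by linarith) h2
      _ = t * w := Real.log_exp _
      _ ≤ |t| * w + 1 := by nlinarith [le_abs_self t]
  · have hx1 : Real.exp (t * w) ≤ 1 := Real.exp_le_one_iff.mpr (by nlinarith)
    have h1 : (Real.exp (t * w) + (q:ℝ) - 1) / (q:ℝ) ≤ 1 := by
      rw [div_le_one hqpos]; linarith
    have h2 : (1:ℝ) / 2 ≤ (Real.exp (t * w) + (q:ℝ) - 1) / (q:ℝ) := by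
      rw [div_le_div_iff₀ two_pos hqpos]; linarith
    have hy : (0:ℝ) < (Real.exp (t * w) + (q:ℝ) - 1) / (q:ℝ) := by positivity
    have hlog2 : Real.log 2 ≤ 1 := by
      have := Real.log_le_sub_one_of_pos (show (0:ℝ) < 2 by norm_num); linarith
    have hge : -1 ≤ Real.log ((Real.exp (t * w) + (q:ℝ) - 1) / (q:ℝ)) := by
      have := Real.log_le_log (by norm_num : (0:ℝ) < 1/2) h2
      rw [show (1:ℝ)/2 = 2⁻¹ by norm_num, Real.log_inv] at this
      linarith
    rw [abs_of_nonpos (Real.log_nonpos hy.le h1)]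
    nlinarith [abs_nonneg t, mul_nonneg (abs_nonneg t) hw]

end realaux

noncomputable def Dfun {Ω : Type*} [MeasurableSpace Ω] (μ : Measure Ω)
    (W : Ω → ℝ) (q : ℕ) (t : ℝ) : ℝ :=
  ∫ ω, (W ω / (∫ ω', W ω' ∂μ)) *
    ((q:ℝ) * W ω * Real.exp (t * W ω) / (Real.exp (t * W ω) + (q:ℝ) - 1) ^ 2) ∂μ

section meas

variable {Ω : Type*} [MeasurableSpace Ω] {μ : Measure Ω} [IsProbabilityMeasure μ]
  {W : Ω → ℝ} {q : ℕ}

lemma measF (hWmeas : Measurable W) (E : ℝ) (t : ℝ) :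
    AEStronglyMeasurable
      (fun ω => W ω / E * (Real.exp (t * W ω) - 1) / (Real.exp (t * W ω) + (q:ℝ) - 1)) μ := by
  apply Measurable.aestronglyMeasurable
  fun_prop

lemma measD (hWmeas : Measurable W) (E : ℝ) (t : ℝ) :
    AEStronglyMeasurable
      (fun ω => W ω / E *
        ((q:ℝ) * W ω * Real.exp (t * W ω) / (Real.exp (t * W ω) + (q:ℝ) - 1) ^ 2)) μ := by
  apply Measurable.aestronglyMeasurable
  fun_prop

lemma measLog (hWmeas : Measurable W) (t : ℝ) :
    AEStronglyMeasurable
      (fun ω => Real.log ((Real.exp (t * W ω) + (q:ℝ) - 1) / (q:ℝ))) μ :=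
  (Real.measurable_log.comp (by fun_prop : Measurable fun ω =>
    (Real.exp (t * W ω) + (q:ℝ) - 1) / (q:ℝ))).aestronglyMeasurable

lemma measLD (hWmeas : Measurable W) (t : ℝ) :
    AEStronglyMeasurable
      (fun ω => W ω * Real.exp (t * W ω) / (Real.exp (t * W ω) + (q:ℝ) - 1)) μ := by
  apply Measurable.aestronglyMeasurable
  fun_prop

lemma intF (hq : 3 ≤ q) (hWmeas : Measurable W) (hWnn : ∀ ω, 0 ≤ W ω)
    (hWint : Integrable W μ) {E : ℝ} (hE : 0 < E) (t : ℝ) :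
    Integrable
      (fun ω => W ω / E * (Real.exp (t * W ω) - 1) / (Real.exp (t * W ω) + (q:ℝ) - 1)) μ := by
  refine (hWint.div_const E).mono' (measF hWmeas E t) (Eventually.of_forall fun ω => ?_)
  have h1 := frac_abs_le_one hq (t * W ω)
  have h2 : 0 ≤ W ω / E := div_nonneg (hWnn ω) hE.le
  rw [Real.norm_eq_abs, mul_div_assoc, abs_mul, abs_of_nonneg h2]
  calc W ω / E * |(Real.exp (t * W ω) - 1) / (Real.exp (t * W ω) + (q:ℝ) - 1)|
      ≤ W ω / E * 1 := by gcongr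
    _ = W ω / E := mul_one _

lemma intD (hq : 3 ≤ q) (hWmeas : Measurable W) (hWnn : ∀ ω, 0 ≤ W ω)
    (hW2 : Integrable (fun ω => (W ω) ^ 2) μ) {E : ℝ} (hE : 0 < E) (t : ℝ) :
    Integrable
      (fun ω => W ω / E *
        ((q:ℝ) * W ω * Real.exp (t * W ω) / (Real.exp (t * W ω) + (q:ℝ) - 1) ^ 2)) μ := by
  refine ((hW2.div_const E).const_mul (q:ℝ)).mono' (measD hWmeas E t)
    (Eventually.of_forall fun ω => ?_)
  have hd := denom_pos hq (t * W ω)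
  have hx := Real.exp_pos (t * W ω)
  have hsq := exp_div_sq_le_one hq (t * W ω)
  have hw := hWnn ω
  have hq' := qR_big hq
  have h1 : (q:ℝ) * W ω * Real.exp (t * W ω) / (Real.exp (t * W ω) + (q:ℝ) - 1) ^ 2
      ≤ (q:ℝ) * W ω := by
    rw [div_le_iff₀ (by positivity)]
    exact mul_le_mul_of_nonneg_left hsq (by positivity)
  have h2 : 0 ≤ W ω / E := div_nonneg hw hE.le
  rw [Real.norm_eq_abs, abs_of_nonneg (by positivity)]
  calc W ω / E * ((q:ℝ) * W ω * Real.exp (t * W ω) / (Real.exp (t * W ω) + (q:ℝ) - 1) ^ 2)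
      ≤ W ω / E * ((q:ℝ) * W ω) := by gcongr
    _ = (q:ℝ) * (W ω ^ 2 / E) := by ring

lemma intLog (hq : 3 ≤ q) (hWmeas : Measurable W) (hWnn : ∀ ω, 0 ≤ W ω)
    (hWint : Integrable W μ) (t : ℝ) :
    Integrable (fun ω => Real.log ((Real.exp (t * W ω) + (q:ℝ) - 1) / (q:ℝ))) μ := by
  refine ((hWint.const_mul |t|).add (integrable_const 1)).mono' (measLog hWmeas t)
    (Eventually.of_forall fun ω => ?_)
  simpa [Real.norm_eq_abs] using log_bound hq (hWnn ω) t

lemma intLD (hq : 3 ≤ q) (hWmeas : Measurable W) (hWnn : ∀ ω, 0 ≤ W ω)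
    (hWint : Integrable W μ) (t : ℝ) :
    Integrable (fun ω => W ω * Real.exp (t * W ω) / (Real.exp (t * W ω) + (q:ℝ) - 1)) μ := by
  refine hWint.mono' (measLD hWmeas t) (Eventually.of_forall fun ω => ?_)
  have hd := denom_pos hq (t * W ω)
  have hx := Real.exp_pos (t * W ω)
  have hw := hWnn ω
  have hq' := qR_big hq
  rw [Real.norm_eq_abs, abs_of_nonneg (by positivity)]
  rw [div_le_iff₀ hd]; nlinarith

end meas

section main

set_option linter.unusedSectionVars false

variable {Ω : Type*} [MeasurableSpace Ω] {μ : Measure Ω} [IsProbabilityMeasure μ]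
  {W : Ω → ℝ} {q : ℕ}

lemma hasDerivAt_Ffun (hq : 3 ≤ q) (hWmeas : Measurable W) (hWnn : ∀ ω, 0 ≤ W ω)
    (hWint : Integrable W μ) (hEW : 0 < ∫ ω, W ω ∂μ)
    (hW2 : Integrable (fun ω => (W ω) ^ 2) μ) (t : ℝ) :
    HasDerivAt (Ffun μ W q) (Dfun μ W q t) t := by
  set E := ∫ ω, W ω ∂μ with hE
  have h := hasDerivAt_integral_of_dominated_loc_of_deriv_le (μ := μ) (x₀ := t)
    (F := fun t ω => W ω / E * (Real.exp (t * W ω) - 1) / (Real.exp (t * W ω) + (q:ℝ) - 1))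
    (F' := fun t ω => W ω / E *
      ((q:ℝ) * W ω * Real.exp (t * W ω) / (Real.exp (t * W ω) + (q:ℝ) - 1) ^ 2))
    (bound := fun ω => (q:ℝ) * (W ω ^ 2 / E)) (Metric.ball_mem_nhds t one_pos)
    (Eventually.of_forall fun x => measF hWmeas E x)
    (intF hq hWmeas hWnn hWint hEW t)
    (measD hWmeas E t)
    (Eventually.of_forall fun ω => ?_)
    (by simpa using (hW2.div_const E).const_mul (q:ℝ))
    (Eventually.of_forall fun ω x _ => hasDerivAt_frac hq (W ω / E) (W ω) x)
  · exact h.2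
  · intro x _
    have hd := denom_pos hq (x * W ω)
    have hx := Real.exp_pos (x * W ω)
    have hsq := exp_div_sq_le_one hq (x * W ω)
    have hw := hWnn ω
    have hq' := qR_big hq
    have h1 : (q:ℝ) * W ω * Real.exp (x * W ω) / (Real.exp (x * W ω) + (q:ℝ) - 1) ^ 2
        ≤ (q:ℝ) * W ω := by
      rw [div_le_iff₀ (by positivity)]
      exact mul_le_mul_of_nonneg_left hsq (by positivity)
    have h2 : 0 ≤ W ω / E := div_nonneg hw hEW.le
    rw [Real.norm_eq_abs, abs_of_nonneg (by positivity)]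
    calc W ω / E * ((q:ℝ) * W ω * Real.exp (x * W ω) / (Real.exp (x * W ω) + (q:ℝ) - 1) ^ 2)
        ≤ W ω / E * ((q:ℝ) * W ω) := by gcongr
      _ = (q:ℝ) * (W ω ^ 2 / E) := by ring

lemma Dfun_cont (hq : 3 ≤ q) (hWmeas : Measurable W) (hWnn : ∀ ω, 0 ≤ W ω)
    (hEW : 0 < ∫ ω, W ω ∂μ) (hW2 : Integrable (fun ω => (W ω) ^ 2) μ) :
    Continuous (Dfun μ W q) := by
  set E := ∫ ω, W ω ∂μ with hE
  rw [continuous_iff_continuousAt]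
  intro t
  apply continuousAt_of_dominated (bound := fun ω => (q:ℝ) * (W ω ^ 2 / E))
    (Eventually.of_forall fun x => measD hWmeas E x)
  · refine Eventually.of_forall fun x => Eventually.of_forall fun ω => ?_
    have hd := denom_pos hq (x * W ω)
    have hx := Real.exp_pos (x * W ω)
    have hsq := exp_div_sq_le_one hq (x * W ω)
    have hw := hWnn ω
    have h1 : (q:ℝ) * W ω * Real.exp (x * W ω) / (Real.exp (x * W ω) + (q:ℝ) - 1) ^ 2
        ≤ (q:ℝ) * W ω := by
      rw [div_le_iff₀ (by positivity)]
      exact mul_le_mul_of_nonneg_left hsq (by positivity)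
    have h2 : 0 ≤ W ω / E := div_nonneg hw hEW.le
    rw [Real.norm_eq_abs, abs_of_nonneg (by positivity)]
    calc W ω / E * ((q:ℝ) * W ω * Real.exp (x * W ω) / (Real.exp (x * W ω) + (q:ℝ) - 1) ^ 2)
        ≤ W ω / E * ((q:ℝ) * W ω) := by gcongr
      _ = (q:ℝ) * (W ω ^ 2 / E) := by ring
  · simpa using (hW2.div_const E).const_mul (q:ℝ)
  · refine Eventually.of_forall fun ω => ?_
    have hcont : Continuous fun x : ℝ =>
        (q:ℝ) * W ω * Real.exp (x * W ω) / (Real.exp (x * W ω) + (q:ℝ) - 1) ^ 2 := by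
      apply Continuous.div (by fun_prop) (by fun_prop)
      intro x
      exact ne_of_gt (pow_pos (denom_pos hq (x * W ω)) 2)
    exact (continuous_const.mul hcont).continuousAt

lemma Dfun_nonneg (hq : 3 ≤ q) (hWnn : ∀ ω, 0 ≤ W ω) (hEW : 0 < ∫ ω, W ω ∂μ) (t : ℝ) :
    0 ≤ Dfun μ W q t := by
  apply integral_nonneg
  intro ω
  have hd := denom_pos hq (t * W ω)
  have hx := Real.exp_pos (t * W ω)
  have hw := hWnn ω
  have hq' := qR_big hq
  positivity

lemma Ffun_zero : Ffun μ W q 0 = 0 := by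
  simp [Ffun]

lemma Kfun_zero (hq : 3 ≤ q) : Kfun μ W q 0 = 0 := by
  have hq0 : ((q:ℝ)) ≠ 0 := by have := qR_big hq; linarith
  simp [Kfun, Ffun_zero, div_self hq0]

lemma Ffun_le_one (hq : 3 ≤ q) (hWmeas : Measurable W) (hWnn : ∀ ω, 0 ≤ W ω)
    (hWint : Integrable W μ) (hEW : 0 < ∫ ω, W ω ∂μ) (t : ℝ) :
    Ffun μ W q t ≤ 1 := by
  set E := ∫ ω, W ω ∂μ with hE
  have h := integral_mono (intF hq hWmeas hWnn hWint hEW t) (hWint.div_const E) ?_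
  · rw [Ffun]
    refine h.trans ?_
    rw [integral_div, ← hE, div_self (ne_of_gt hEW)]
  · intro ω
    have hd := denom_pos hq (t * W ω)
    have hx := Real.exp_pos (t * W ω)
    have hw := hWnn ω
    have hq' := qR_big hq
    have h2 : 0 ≤ W ω / E := div_nonneg hw hEW.le
    rw [div_le_iff₀ hd]
    nlinarith

lemma Ffun_pos (hq : 3 ≤ q) (hWmeas : Measurable W) (hWnn : ∀ ω, 0 ≤ W ω)
    (hWint : Integrable W μ) (hEW : 0 < ∫ ω, W ω ∂μ) {t : ℝ} (ht : 0 < t) :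
    0 < Ffun μ W q t := by
  set E := ∫ ω, W ω ∂μ with hE
  have hnn : 0 ≤ fun ω => W ω / E * (Real.exp (t * W ω) - 1) / (Real.exp (t * W ω) + (q:ℝ) - 1) := by
    intro ω
    have hd := denom_pos hq (t * W ω)
    have hw := hWnn ω
    have hx : (1:ℝ) ≤ Real.exp (t * W ω) := Real.one_le_exp (by positivity)
    have h2 : 0 ≤ W ω / E := div_nonneg hw hEW.le
    have : 0 ≤ W ω / E * (Real.exp (t * W ω) - 1) := by nlinarith
    positivity
  rw [Ffun, integral_pos_iff_support_of_nonneg hnn (intF hq hWmeas hWnn hWint hEW t)]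
  have h0 : 0 < μ (Function.support W) :=
    (integral_pos_iff_support_of_nonneg hWnn hWint).1 hEW
  refine lt_of_lt_of_le h0 (measure_mono ?_)
  intro ω hω
  have hw : W ω ≠ 0 := hω
  have hwpos : 0 < W ω := lt_of_le_of_ne (hWnn ω) (Ne.symm hw)
  have hd := denom_pos hq (t * W ω)
  have hx : (1:ℝ) < Real.exp (t * W ω) := by
    rw [show (1:ℝ) = Real.exp 0 by simp]
    exact Real.exp_lt_exp.mpr (by positivity)
  have : 0 < W ω / E * (Real.exp (t * W ω) - 1) / (Real.exp (t * W ω) + (q:ℝ) - 1) := by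
    apply div_pos _ hd
    apply mul_pos (div_pos hwpos hEW)
    linarith
  exact ne_of_gt this

end main

section main2

set_option linter.unusedSectionVars false

variable {Ω : Type*} [MeasurableSpace Ω] {μ : Measure Ω} [IsProbabilityMeasure μ]
  {W : Ω → ℝ} {q : ℕ}

lemma integral_LD_eq (hq : 3 ≤ q) (hWmeas : Measurable W) (hWnn : ∀ ω, 0 ≤ W ω)
    (hWint : Integrable W μ) (hEW : 0 < ∫ ω, W ω ∂μ) (t : ℝ) :
    (∫ ω, W ω * Real.exp (t * W ω) / (Real.exp (t * W ω) + (q:ℝ) - 1) ∂μ)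
      = ((q:ℝ) - 1) / q * ((∫ ω, W ω ∂μ) * Ffun μ W q t) + (∫ ω, W ω ∂μ) / q := by
  set E := ∫ ω, W ω ∂μ with hE
  have hq0 : ((q:ℝ)) ≠ 0 := by have := qR_big hq; linarith
  have hpt : ∀ ω, W ω * Real.exp (t * W ω) / (Real.exp (t * W ω) + (q:ℝ) - 1)
      = ((q:ℝ) - 1) / q * (E * (W ω / E * (Real.exp (t * W ω) - 1) / (Real.exp (t * W ω) + (q:ℝ) - 1)))
        + W ω / q := by
    intro ω
    have hd := denom_pos hq (t * W ω)
    have hE0 : E ≠ 0 := ne_of_gt hEW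
    have hd' : Real.exp (t * W ω) + (q:ℝ) - 1 ≠ 0 := ne_of_gt hd
    generalize Real.exp (t * W ω) = e at hd' ⊢
    field_simp
    ring
  have h1 : (∫ ω, W ω * Real.exp (t * W ω) / (Real.exp (t * W ω) + (q:ℝ) - 1) ∂μ)
      = ∫ ω, (((q:ℝ) - 1) / q * E) * (W ω / E * (Real.exp (t * W ω) - 1) / (Real.exp (t * W ω) + (q:ℝ) - 1))
        + W ω / q ∂μ := by
    congr 1
    funext ω
    rw [hpt ω]
    ring
  rw [h1, integral_add (((intF hq hWmeas hWnn hWint hEW t).const_mul _)) (hWint.div_const _),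
    MeasureTheory.integral_const_mul, integral_div]
  rw [Ffun]
  ring

lemma hasDerivAt_Kfun (hq : 3 ≤ q) (hWmeas : Measurable W) (hWnn : ∀ ω, 0 ≤ W ω)
    (hWint : Integrable W μ) (hEW : 0 < ∫ ω, W ω ∂μ)
    (hW2 : Integrable (fun ω => (W ω) ^ 2) μ) (t : ℝ) :
    HasDerivAt (Kfun μ W q)
      (((q:ℝ) - 1) / (2 * q) * (Ffun μ W q t - t * Dfun μ W q t)) t := by
  set E := ∫ ω, W ω ∂μ with hE
  have hq' := qR_big hq
  have hq0 : ((q:ℝ)) ≠ 0 := by linarith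
  -- derivative of the log-integral
  have hL := hasDerivAt_integral_of_dominated_loc_of_deriv_le (μ := μ) (x₀ := t)
    (F := fun t ω => Real.log ((Real.exp (t * W ω) + (q:ℝ) - 1) / (q:ℝ)))
    (F' := fun t ω => W ω * Real.exp (t * W ω) / (Real.exp (t * W ω) + (q:ℝ) - 1))
    (bound := W) (Metric.ball_mem_nhds t one_pos)
    (Eventually.of_forall fun x => measLog hWmeas x)
    (intLog hq hWmeas hWnn hWint t)
    (measLD hWmeas t)
    (Eventually.of_forall fun ω => ?_)
    hWint
    (Eventually.of_forall fun ω x _ => hasDerivAt_logfrac hq (W ω) x)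
  · have hF := hasDerivAt_Ffun hq hWmeas hWnn hWint hEW hW2 t
    have hid : HasDerivAt (fun t : ℝ => t * Ffun μ W q t)
        (1 * Ffun μ W q t + t * Dfun μ W q t) t := (hasDerivAt_id t).mul hF
    have hdiv : HasDerivAt (fun t : ℝ => t / (q:ℝ)) (1 / (q:ℝ)) t := by
      simpa using (hasDerivAt_id t).div_const (q:ℝ)
    have hK : HasDerivAt (Kfun μ W q)
        (1 / E * (∫ ω, W ω * Real.exp (t * W ω) / (Real.exp (t * W ω) + (q:ℝ) - 1) ∂μ)
          - ((q:ℝ) - 1) / (2 * q) * (1 * Ffun μ W q t + t * Dfun μ W q t) - 1 / (q:ℝ)) t :=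
      ((hL.2.const_mul (1 / E)).sub (hid.const_mul (((q:ℝ) - 1) / (2 * q)))).sub hdiv
    convert hK using 1
    rw [integral_LD_eq hq hWmeas hWnn hWint hEW t]
    field_simp
    ring
  · intro x _
    have hd := denom_pos hq (x * W ω)
    have hx := Real.exp_pos (x * W ω)
    have hw := hWnn ω
    rw [Real.norm_eq_abs, abs_of_nonneg (by positivity)]
    rw [div_le_iff₀ hd]
    nlinarith

end main2

/-- **Critical value in zero field**: there is a unique `t_c > 0` with `𝒦(t_c)=0`;
setting `β_c = log(1+t_c/𝓕_0(t_c))` and `s_c = 𝓕_0(t_c)`, one has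
`e^{β_c}−1 = t_c/𝓕_0(t_c)`, the stationarity condition holds at `(β_c,s_c)`, and the
criticality condition `p_{β_c,0}(s_c)=p_{β_c,0}(0)` holds. -/
theorem critical_value_zero_field
    {Ω : Type*} [MeasurableSpace Ω] (μ : Measure Ω) [IsProbabilityMeasure μ]
    (W : Ω → ℝ) (hWmeas : Measurable W) (hWnn : ∀ ω, 0 ≤ W ω)
    (hWint : Integrable W μ) (hEW : 0 < ∫ ω, W ω ∂μ)
    (hW2 : Integrable (fun ω => (W ω) ^ 2) μ)
    (q : ℕ) (hq : 3 ≤ q)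
    (tstar : ℝ) (htstar : 0 < tstar)
    (hconvex : ∀ t : ℝ, 0 < t → t < tstar → 0 < deriv (deriv (Ffun μ W q)) t)
    (hconcave : ∀ t : ℝ, tstar < t → deriv (deriv (Ffun μ W q)) t < 0) :
    (∃! t : ℝ, 0 < t ∧ Kfun μ W q t = 0) ∧
    ∀ tc : ℝ, 0 < tc → Kfun μ W q tc = 0 →
      (Real.exp (Real.log (1 + tc / Ffun μ W q tc)) - 1 = tc / Ffun μ W q tc) ∧
      ((∫ ω, (W ω / (∫ ω', W ω' ∂μ)) *
          (Real.exp ((Real.exp (Real.log (1 + tc / Ffun μ W q tc)) - 1) * W ω *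
            Ffun μ W q tc) - 1) /
          (Real.exp ((Real.exp (Real.log (1 + tc / Ffun μ W q tc)) - 1) * W ω *
            Ffun μ W q tc) + q - 1) ∂μ) = Ffun μ W q tc) ∧
      pfun μ W q (Real.log (1 + tc / Ffun μ W q tc)) (Ffun μ W q tc)
        = pfun μ W q (Real.log (1 + tc / Ffun μ W q tc)) 0 := by
  have hq' := qR_big hq
  have hq0 : ((q:ℝ)) ≠ 0 := by linarith
  set E := ∫ ω, W ω ∂μ with hE
  set F := Ffun μ W q with hFdef
  set D := Dfun μ W q with hDdef
  set K := Kfun μ W q with hKdef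
  set c0 : ℝ := ((q:ℝ) - 1) / (2 * q) with hc0def
  have hc0 : 0 < c0 := div_pos (by linarith) (by linarith)
  have hFd : ∀ t, HasDerivAt F (D t) t :=
    fun t => hasDerivAt_Ffun hq hWmeas hWnn hWint hEW hW2 t
  set G : ℝ → ℝ := fun t => F t - t * D t with hGdef
  have hKd : ∀ t, HasDerivAt K (c0 * G t) t :=
    fun t => hasDerivAt_Kfun hq hWmeas hWnn hWint hEW hW2 t
  have hDF : deriv F = D := funext fun t => (hFd t).deriv
  have hFcont : Continuous F :=
    continuous_iff_continuousAt.2 fun t => (hFd t).continuousAt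
  have hDcont : Continuous D := Dfun_cont hq hWmeas hWnn hEW hW2
  have hGcont : Continuous G := hFcont.sub (continuous_id.mul hDcont)
  have hconvex' : ∀ t : ℝ, 0 < t → t < tstar → 0 < deriv D t := by
    intro t h1 h2; have := hconvex t h1 h2; rwa [hDF] at this
  have hconcave' : ∀ t : ℝ, tstar < t → deriv D t < 0 := by
    intro t h1; have := hconcave t h1; rwa [hDF] at this
  have hGderiv : ∀ t : ℝ, DifferentiableAt ℝ D t → deriv G t = -(t * deriv D t) := by
    intro t hDt
    have h1 : HasDerivAt (fun t => t * D t) (1 * D t + t * deriv D t) t :=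
      (hasDerivAt_id t).mul hDt.hasDerivAt
    have h2 : HasDerivAt G (D t - (1 * D t + t * deriv D t)) t := (hFd t).sub h1
    rw [h2.deriv]; ring
  have hGanti : StrictAntiOn G (Icc 0 tstar) := by
    apply strictAntiOn_of_deriv_neg (convex_Icc 0 tstar) hGcont.continuousOn
    intro t ht
    rw [interior_Icc] at ht
    have hpos := hconvex' t ht.1 ht.2
    have hd : DifferentiableAt ℝ D t := differentiableAt_of_deriv_ne_zero (ne_of_gt hpos)
    rw [hGderiv t hd]
    have := ht.1
    nlinarith
  have hGmono : StrictMonoOn G (Ici tstar) := by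
    apply strictMonoOn_of_deriv_pos (convex_Ici tstar) hGcont.continuousOn
    intro t ht
    rw [interior_Ici] at ht
    have hneg := hconcave' t ht
    have hd : DifferentiableAt ℝ D t := differentiableAt_of_deriv_ne_zero (ne_of_lt hneg)
    rw [hGderiv t hd]
    have : 0 < t := htstar.trans ht
    nlinarith
  have hDanti : StrictAntiOn D (Ici tstar) := by
    apply strictAntiOn_of_deriv_neg (convex_Ici tstar) hDcont.continuousOn
    intro t ht
    rw [interior_Ici] at ht
    exact hconcave' t ht
  have hFmono : Monotone F :=
    monotone_of_deriv_nonneg (fun t => (hFd t).differentiableAt)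
      (fun t => by rw [hDF]; exact Dfun_nonneg hq hWnn hEW t)
  have hbdd : BddAbove (range F) := by
    refine ⟨1, ?_⟩
    rintro _ ⟨t, rfl⟩
    exact Ffun_le_one hq hWmeas hWnn hWint hEW t
  set L := ⨆ t : ℝ, F t with hLdef
  have htend : Tendsto F atTop (𝓝 L) := tendsto_atTop_ciSup hFmono hbdd
  have hFleL : ∀ t, F t ≤ L := fun t => le_ciSup hbdd t
  have hLpos : 0 < L :=
    lt_of_lt_of_le (Ffun_pos hq hWmeas hWnn hWint hEW one_pos) (hFleL 1)
  obtain ⟨a, ha⟩ := eventually_atTop.mp (htend.eventually (eventually_gt_nhds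
    (show L - L/8 < L by linarith)))
  set T₁ := max a (tstar + 1) with hT₁def
  have hT₁t : tstar < T₁ := lt_of_lt_of_le (by linarith) (le_max_right _ _)
  have hT₁pos : 0 < T₁ := htstar.trans hT₁t
  have hFT₁ : L - L/8 < F T₁ := ha T₁ (le_max_left _ _)
  have hlt : T₁ < 2 * T₁ := by linarith
  obtain ⟨c, hcmem, hcval⟩ := exists_hasDerivAt_eq_slope F D hlt
    hFcont.continuousOn (fun x _ => hFd x)
  rw [show 2 * T₁ - T₁ = T₁ by ring] at hcval
  have hc2 : D (2 * T₁) ≤ D c :=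
    (hDanti (mem_Ici.2 (hT₁t.trans hcmem.1).le)
      (mem_Ici.2 (by linarith : tstar ≤ 2 * T₁)) hcmem.2).le
  have hGT : 0 < G (2 * T₁) := by
    have h1 : 2 * T₁ * D (2 * T₁) ≤ 2 * (F (2 * T₁) - F T₁) := by
      calc 2 * T₁ * D (2 * T₁) ≤ 2 * T₁ * D c := by
            apply mul_le_mul_of_nonneg_left hc2; linarith
        _ = 2 * (F (2 * T₁) - F T₁) := by rw [hcval]; field_simp
    have h2 : F (2 * T₁) ≤ L := hFleL _
    have h3 : F T₁ ≤ F (2 * T₁) := hFmono (by linarith)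
    have : G (2 * T₁) = F (2 * T₁) - 2 * T₁ * D (2 * T₁) := rfl
    rw [this]
    linarith
  set T := 2 * T₁ with hTdef
  have hTt : tstar < T := by rw [hTdef]; linarith
  have hG0 : G 0 = 0 := by
    have : G 0 = F 0 - 0 * D 0 := rfl
    rw [this, hFdef, Ffun_zero]; ring
  have hGts : G tstar < 0 := by
    have := hGanti (left_mem_Icc.2 htstar.le) (right_mem_Icc.2 htstar.le) htstar
    rwa [hG0] at this
  obtain ⟨t₀, ht₀mem, hGt₀⟩ : ∃ t₀ ∈ Ioo tstar T, G t₀ = 0 := by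
    have h := intermediate_value_Ioo hTt.le hGcont.continuousOn
    exact h ⟨hGts, hGT⟩
  have ht₀pos : 0 < t₀ := htstar.trans ht₀mem.1
  have hGneg : ∀ t, 0 < t → t < t₀ → G t < 0 := by
    intro t h1 h2
    rcases le_or_gt t tstar with h | h
    · have := hGanti (left_mem_Icc.2 htstar.le) ⟨h1.le, h⟩ h1
      rwa [hG0] at this
    · have := hGmono (mem_Ici.2 h.le) (mem_Ici.2 ht₀mem.1.le) h2
      rwa [hGt₀] at this
  have hGpos' : ∀ t, t₀ < t → 0 < G t := by
    intro t h
    have := hGmono (mem_Ici.2 ht₀mem.1.le) (mem_Ici.2 (ht₀mem.1.trans h).le) h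
    rwa [hGt₀] at this
  have hKderiv : deriv K = fun t => c0 * G t := funext fun t => (hKd t).deriv
  have hKcont : Continuous K :=
    continuous_iff_continuousAt.2 fun t => (hKd t).continuousAt
  have hK0 : K 0 = 0 := Kfun_zero hq
  have hKanti : StrictAntiOn K (Icc 0 t₀) := by
    apply strictAntiOn_of_deriv_neg (convex_Icc _ _) hKcont.continuousOn
    intro t ht
    rw [interior_Icc] at ht
    rw [hKderiv]
    exact mul_neg_of_pos_of_neg hc0 (hGneg t ht.1 ht.2)
  have hKmono : StrictMonoOn K (Ici t₀) := by
    apply strictMonoOn_of_deriv_pos (convex_Ici _) hKcont.continuousOn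
    intro t ht
    rw [interior_Ici] at ht
    rw [hKderiv]
    exact mul_pos hc0 (hGpos' t ht)
  have hKt₀ : K t₀ < 0 := by
    have := hKanti (left_mem_Icc.2 ht₀pos.le) (right_mem_Icc.2 ht₀pos.le) ht₀pos
    rwa [hK0] at this
  have ht₀T : t₀ < T := ht₀mem.2
  have hGTpos : 0 < G T := hGpos' T ht₀T
  set T₂ := T + (1 + |K T|) / (c0 * G T) with hT₂def
  have hfrac : 0 < (1 + |K T|) / (c0 * G T) := by positivity
  have hT₂T : T < T₂ := by rw [hT₂def]; linarith
  have hKT₂ : 0 < K T₂ := by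
    obtain ⟨c', hc'mem, hc'val⟩ := exists_hasDerivAt_eq_slope K (fun t => c0 * G t) hT₂T
      hKcont.continuousOn (fun x _ => hKd x)
    have hgc : G T ≤ G c' :=
      (hGmono (mem_Ici.2 hTt.le) (mem_Ici.2 (hTt.trans hc'mem.1).le) hc'mem.1).le
    have hTne : T₂ - T ≠ 0 := ne_of_gt (by linarith)
    have h1 : K T₂ - K T = c0 * G c' * (T₂ - T) := by
      rw [hc'val]; field_simp
    have h2 : c0 * G T * (T₂ - T) = 1 + |K T| := by
      have : T₂ - T = (1 + |K T|) / (c0 * G T) := by rw [hT₂def]; ring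
      rw [this]; field_simp
    have h3 : c0 * G T * (T₂ - T) ≤ c0 * G c' * (T₂ - T) := by
      apply mul_le_mul_of_nonneg_right _ (by linarith)
      exact mul_le_mul_of_nonneg_left hgc hc0.le
    have h4 := neg_abs_le (K T)
    linarith
  obtain ⟨tc, htcmem, hKtc⟩ : ∃ tc ∈ Ioo t₀ T₂, K tc = 0 := by
    have h := intermediate_value_Ioo (le_of_lt (ht₀T.trans hT₂T)) hKcont.continuousOn
    exact h ⟨hKt₀, hKT₂⟩
  have htcpos : 0 < tc := ht₀pos.trans htcmem.1
  have huniq : ∀ y, 0 < y → K y = 0 → y = tc := by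
    intro y hy hKy
    have hy' : t₀ < y := by
      by_contra hcon
      push_neg at hcon
      have := hKanti (left_mem_Icc.2 ht₀pos.le) ⟨hy.le, hcon⟩ hy
      rw [hK0] at this
      linarith [hKy ▸ this]
    exact hKmono.injOn (mem_Ici.2 hy'.le) (mem_Ici.2 htcmem.1.le)
      (by rw [hKy, hKtc])
  constructor
  · exact ⟨tc, ⟨htcpos, hKtc⟩, fun y hy => huniq y hy.1 hy.2⟩
  · intro tc' htc' hKtc'
    have hs : 0 < F tc' := Ffun_pos hq hWmeas hWnn hWint hEW htc'
    have hsne : F tc' ≠ 0 := ne_of_gt hs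
    have h1p : (0:ℝ) < 1 + tc' / F tc' := by positivity
    have hexp : Real.exp (Real.log (1 + tc' / F tc')) - 1 = tc' / F tc' := by
      rw [Real.exp_log h1p]; ring
    refine ⟨hexp, ?_, ?_⟩
    · have key : ∀ ω : Ω,
          (Real.exp (Real.log (1 + tc' / F tc')) - 1) * W ω * F tc' = tc' * W ω := by
        intro ω
        rw [hexp]
        field_simp
      simp only [key]
      rfl
    · unfold pfun
      rw [← hE, hexp]
      have key2 : ∀ ω : Ω, tc' / F tc' * W ω * F tc' = tc' * W ω := by
        intro ω; field_simp
      simp only [key2, mul_zero, Real.exp_zero]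
      have hq1 : (1:ℝ) + (q:ℝ) - 1 = (q:ℝ) := by ring
      rw [hq1]
      have split : (fun ω => Real.log (Real.exp (tc' * W ω) + (q:ℝ) - 1))
          = fun ω => Real.log ((Real.exp (tc' * W ω) + (q:ℝ) - 1) / (q:ℝ)) + Real.log (q:ℝ) := by
        funext ω
        rw [Real.log_div (ne_of_gt (denom_pos hq _)) hq0]
        ring
      rw [split, integral_add (intLog hq hWmeas hWnn hWint tc') (integrable_const _),
        integral_const]
      simp only [probReal_univ, measure_univ, ENNReal.toReal_one, one_smul, smul_eq_mul, one_mul]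
      have hKe := hKtc'
      rw [hKdef] at hKe
      unfold Kfun at hKe
      rw [← hFdef, ← hE] at hKe
      have hI : (∫ ω, Real.log ((Real.exp (tc' * W ω) + (q:ℝ) - 1) / (q:ℝ)) ∂μ)
          = E * (((q:ℝ) - 1) / (2 * q) * (tc' * F tc') + tc' / (q:ℝ)) := by
        have hEne : E ≠ 0 := ne_of_gt hEW
        field_simp at hKe
        field_simp
        linarith
      rw [hI]
      field_simp
      ring
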